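/- Let S_λ be a bounded left-invertible balanced weighted shift on a rootless, leafless directed tree. Then for every n ∈ ℕ: S_λ^n(ker S_λ*) = S_λ^n(ℓ²(V)) ⊖ S_λ^{n+1}(ℓ²(V)); the subspaces S_λ^n(ker S_λ*) and S_λ^m(ker S_λ*) are orthogonal for distinct m, n; and for every n ≥ 1, the orthogonal direct sum ⊕_{k=0}^{n-1} S_λ^k(ker S_λ*) equals ℓ²(V) ⊖ S_λ^n(ℓ²(V)). -/

import Mathlib

/-- A countably infinite, leafless, rootless directed tree, encoded by its parent
function: every vertex has a child (leafless), there are no circuits, and the tree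
is connected (any two vertices have a common ancestor). -/
structure RootlessTree (V : Type*) where
  par : V → V
  leafless : ∀ u : V, ∃ w : V, par w = u
  acyclic : ∀ (u : V) (n : ℕ), 0 < n → par^[n] u ≠ u
  connected : ∀ u w : V, ∃ k l : ℕ, par^[k] u = par^[l] w

/-- `Aset T v n` is the set `A(v,n)`: `A(v,0) = {v}` and
`A(v,n) = Chi^n(par^n(v)) \ Chi^{n-1}(par^{n-1}(v))` for `n ≥ 1`. -/
def Aset {V : Type*} (T : RootlessTree V) (v : V) : ℕ → Set V
  | 0 => {v}
  | n + 1 => {w | T.par^[n + 1] w = T.par^[n + 1] v ∧ ¬ T.par^[n] w = T.par^[n] v}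

open scoped ENNReal

/-- `lamN T wt n u` is `λ⁽ⁿ⁾(u) = λ_u · λ_{par u} ⋯ λ_{parⁿ⁻¹ u}`. -/
def lamN {V : Type*} (T : RootlessTree V) (wt : V → ℝ) (n : ℕ) (u : V) : ℝ :=
  ∏ j ∈ Finset.range n, wt (T.par^[j] u)

/-- `alphaFun T wt v = α_λ(v) = Σ_{n≥0} Σ_{u ∈ A(v,n)} (λ⁽ⁿ⁾(u)/λ⁽ⁿ⁾(v))²`,
as an extended nonnegative real. -/
noncomputable def alphaFun {V : Type*} (T : RootlessTree V) (wt : V → ℝ) (v : V) : ℝ≥0∞ :=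
  ∑' n : ℕ, ∑' u : (Aset T v n), ENNReal.ofReal ((lamN T wt n u / lamN T wt n v) ^ 2)

open ContinuousLinearMap

section MultAux
variable {V : Type*}

lemma memℓp_mult (φ : V → ℝ) (C : ℝ) (hC : ∀ v, |φ v| ≤ C)
    (f : lp (fun _ : V => ℂ) 2) : Memℓp (fun v => (φ v : ℂ) * f v) 2 := by
  apply memℓp_gen
  have ht : (2 : ℝ≥0∞).toReal = ((2 : ℕ) : ℝ) := by norm_num
  have hsum : Summable fun v => C ^ 2 * ‖f v‖ ^ (2 : ℕ) := by
    refine Summable.mul_left _ ?_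
    have := (lp.memℓp f).summable (p := 2) (by norm_num)
    simpa [ht, Real.rpow_natCast] using this
  refine hsum.of_nonneg_of_le (fun v => by positivity) fun v => ?_
  rw [ht, Real.rpow_natCast]
  have h1 : ‖(φ v : ℂ) * f v‖ = |φ v| * ‖f v‖ := by
    rw [norm_mul, Complex.norm_real, Real.norm_eq_abs]
  rw [h1, mul_pow]
  have h2 : |φ v| ^ 2 ≤ C ^ 2 := by
    have := hC v
    nlinarith [abs_nonneg (φ v)]
  nlinarith [sq_nonneg ‖f v‖, norm_nonneg (f v)]

/-- Multiplication operator by a bounded real function on `ℓ²(V, ℂ)`. -/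
noncomputable def multOp (φ : V → ℝ) (C : ℝ) (hC0 : 0 ≤ C) (hC : ∀ v, |φ v| ≤ C) :
    lp (fun _ : V => ℂ) 2 →L[ℂ] lp (fun _ : V => ℂ) 2 := by
  refine LinearMap.mkContinuous
    { toFun := fun f => ⟨fun v => (φ v : ℂ) * f v, memℓp_mult φ C hC f⟩
      map_add' := fun f g => by
        apply lp.ext
        funext v
        simp [mul_add]
        rfl
      map_smul' := fun c f => by
        apply lp.ext
        funext v
        simp [lp.coeFn_smul]
        ring } C (fun f => ?_)
  have ht : (2 : ℝ≥0∞).toReal = ((2 : ℕ) : ℝ) := by norm_num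
  refine lp.norm_le_of_tsum_le (by norm_num) (mul_nonneg hC0 (norm_nonneg f)) ?_
  have hfsum : Summable fun v => ‖f v‖ ^ (2 : ℕ) := by
    simpa [ht, Real.rpow_natCast] using (lp.memℓp f).summable (p := 2) (by norm_num)
  have hMf := memℓp_mult φ C hC f
  have hMsum : Summable fun v => ‖(φ v : ℂ) * f v‖ ^ (2 : ℕ) := by
    simpa [ht, Real.rpow_natCast] using hMf.summable (p := 2) (by norm_num)
  calc ∑' v, ‖(φ v : ℂ) * f v‖ ^ (2 : ℝ≥0∞).toReal
      = ∑' v, ‖(φ v : ℂ) * f v‖ ^ (2 : ℕ) := by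
        refine tsum_congr fun v => ?_
        rw [ht, Real.rpow_natCast]
    _ ≤ ∑' v, C ^ 2 * ‖f v‖ ^ (2 : ℕ) := by
        refine Summable.tsum_le_tsum (fun v => ?_) hMsum (hfsum.mul_left _)
        rw [norm_mul, Complex.norm_real, Real.norm_eq_abs, mul_pow]
        have h2 : |φ v| ^ 2 ≤ C ^ 2 := by nlinarith [abs_nonneg (φ v), hC v]
        nlinarith [sq_nonneg ‖f v‖]
    _ = C ^ 2 * ∑' v, ‖f v‖ ^ (2 : ℕ) := tsum_mul_left
    _ = (C * ‖f‖) ^ (2 : ℝ≥0∞).toReal := by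
        rw [ht, Real.rpow_natCast, mul_pow]
        congr 1
        have := lp.norm_rpow_eq_tsum (p := 2) (by norm_num) f
        rw [ht, Real.rpow_natCast] at this
        rw [this]
        exact tsum_congr fun v => by rw [Real.rpow_natCast]

lemma multOp_apply (φ : V → ℝ) (C : ℝ) (hC0 : 0 ≤ C) (hC : ∀ v, |φ v| ≤ C)
    (f : lp (fun _ : V => ℂ) 2) (v : V) :
    (multOp φ C hC0 hC f) v = (φ v : ℂ) * f v := rfl

end MultAux

/-- Abbreviation for the Hilbert space `ℓ²(V, ℂ)`. -/
abbrev Hsp (V : Type*) : Type _ := lp (fun _ : V => ℂ) 2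

set_option maxHeartbeats 1000000 in
/-- For a bounded left-invertible balanced weighted shift `S_λ`:
`S_λⁿ(ker S_λ*) = S_λⁿ(ℓ²(V)) ⊖ S_λⁿ⁺¹(ℓ²(V))`, the subspaces `S_λⁿ(ker S_λ*)` are
pairwise orthogonal, and `⊕_{k<n} S_λᵏ(ker S_λ*) = ℓ²(V) ⊖ S_λⁿ(ℓ²(V))` for `n ≥ 1`. -/
theorem stmt18 {V : Type*} [Countable V] [Infinite V] [DecidableEq V] (T : RootlessTree V)
    (wt : V → ℝ) (hwt : ∀ u : V, 0 < wt u)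
    (S : lp (fun _ : V => ℂ) 2 →L[ℂ] lp (fun _ : V => ℂ) 2)
    (hS : ∀ (f : lp (fun _ : V => ℂ) 2) (v : V), (S f) v = (wt v : ℂ) * f (T.par v))
    (hleft : ∃ c : ℝ, 0 < c ∧ ∀ f : lp (fun _ : V => ℂ) 2, c * ‖f‖ ≤ ‖S f‖)
    (hbal : ∀ u u' : V, (∃ n : ℕ, T.par^[n] u = T.par^[n] u') →
      ‖S (lp.single 2 u (1 : ℂ))‖ = ‖S (lp.single 2 u' (1 : ℂ))‖) :
    (∀ n : ℕ, Submodule.map (↑(S ^ n) : lp (fun _ : V => ℂ) 2 →ₗ[ℂ] lp (fun _ : V => ℂ) 2)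
          (LinearMap.ker (↑(adjoint S) : lp (fun _ : V => ℂ) 2 →ₗ[ℂ] lp (fun _ : V => ℂ) 2)) =
        LinearMap.range (↑(S ^ n) : lp (fun _ : V => ℂ) 2 →ₗ[ℂ] lp (fun _ : V => ℂ) 2) ⊓
          (LinearMap.range (↑(S ^ (n + 1)) : lp (fun _ : V => ℂ) 2 →ₗ[ℂ] lp (fun _ : V => ℂ) 2))ᗮ) ∧
      (∀ m n : ℕ, m ≠ n →
        ∀ x ∈ Submodule.map (↑(S ^ m) : lp (fun _ : V => ℂ) 2 →ₗ[ℂ] lp (fun _ : V => ℂ) 2)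
            (LinearMap.ker (↑(adjoint S) : lp (fun _ : V => ℂ) 2 →ₗ[ℂ] lp (fun _ : V => ℂ) 2)),
          ∀ y ∈ Submodule.map (↑(S ^ n) : lp (fun _ : V => ℂ) 2 →ₗ[ℂ] lp (fun _ : V => ℂ) 2)
            (LinearMap.ker (↑(adjoint S) : lp (fun _ : V => ℂ) 2 →ₗ[ℂ] lp (fun _ : V => ℂ) 2)),
            (inner ℂ x y : ℂ) = 0) ∧
      (∀ n : ℕ, 1 ≤ n →
        (⨆ k ∈ Finset.range n, Submodule.map (↑(S ^ k) : lp (fun _ : V => ℂ) 2 →ₗ[ℂ] lp (fun _ : V => ℂ) 2)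
            (LinearMap.ker (↑(adjoint S) : lp (fun _ : V => ℂ) 2 →ₗ[ℂ] lp (fun _ : V => ℂ) 2))) =
          (LinearMap.range (↑(S ^ n) : lp (fun _ : V => ℂ) 2 →ₗ[ℂ] lp (fun _ : V => ℂ) 2))ᗮ) := by
  obtain ⟨c₀, hc₀, hlow⟩ := hleft
  choose child hchild using T.leafless
  -- the generation function
  set cc : V → ℝ := fun u => ‖S (lp.single 2 u (1 : ℂ))‖ ^ 2 with hcc
  have hccb : ∀ u, |cc u| ≤ ‖S‖ ^ 2 := by
    intro u
    have h1 : ‖S (lp.single 2 u (1 : ℂ))‖ ≤ ‖S‖ := by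
      have := S.le_opNorm (lp.single 2 u (1 : ℂ))
      have hns : ‖lp.single (E := fun _ : V => ℂ) 2 u (1 : ℂ)‖ = ‖(1 : ℂ)‖ :=
        lp.norm_single (E := fun _ : V => ℂ) (p := 2) (by norm_num) u (1 : ℂ)
      rw [hns, norm_one, mul_one] at this
      exact this
    have h0 : (0:ℝ) ≤ ‖S (lp.single 2 u (1 : ℂ))‖ := norm_nonneg _
    have h2 : cc u = ‖S (lp.single 2 u (1 : ℂ))‖ ^ 2 := rfl
    rw [h2, abs_of_nonneg (by positivity)]
    nlinarith [norm_nonneg S]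
  have hgen : ∀ u u', (∃ n : ℕ, T.par^[n] u = T.par^[n] u') → cc u = cc u' := by
    intro u u' h
    simp only [hcc]
    rw [hbal u u' h]
  have hdesc : ∀ n u, T.par^[n] (child^[n] u) = u := by
    intro n
    induction n with
    | zero => intro u; simp
    | succ n ih =>
      intro u
      rw [Function.iterate_succ_apply' child, Function.iterate_succ_apply T.par,
        hchild, ih]
  set γ : ℕ → V → ℝ := fun n u => cc (child^[n] u) with hγ
  have hγb : ∀ n u, |γ n u| ≤ ‖S‖ ^ 2 := fun n u => hccb _
  have hγpar : ∀ n v, γ n v = γ (n + 1) (T.par v) := by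
    intro n v
    apply hgen
    refine ⟨n + 1, ?_⟩
    rw [Function.iterate_succ_apply' T.par, hdesc n v, hdesc (n + 1) (T.par v)]
  have hSnn : (0:ℝ) ≤ ‖S‖ ^ 2 := by positivity
  set M : ℕ → (Hsp V →L[ℂ] Hsp V) := fun n => multOp (γ n) (‖S‖ ^ 2) hSnn (hγb n) with hM
  have hMap : ∀ n (f : Hsp V) v, (M n f) v = (γ n v : ℂ) * f v := fun n f v => rfl
  -- commutation
  have hMS : ∀ k, (M k) * S = S * (M (k + 1)) := by
    intro k
    ext f v
    rw [ContinuousLinearMap.mul_apply, ContinuousLinearMap.mul_apply]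
    rw [hMap, hS, hS, hMap, hγpar k v]
    ring
  have hM0pow : ∀ m k, (M k) * S ^ m = S ^ m * (M (k + m)) := by
    intro m
    induction m with
    | zero => intro k; simp
    | succ m ih =>
      intro k
      calc (M k) * S ^ (m + 1) = ((M k) * S ^ m) * S := by rw [pow_succ, mul_assoc]
        _ = (S ^ m * (M (k + m))) * S := by rw [ih]
        _ = S ^ m * ((M (k + m)) * S) := by rw [mul_assoc]
        _ = S ^ m * (S * (M (k + m + 1))) := by rw [hMS]
        _ = (S ^ m * S) * (M (k + (m + 1))) := by rw [mul_assoc, add_assoc]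
        _ = S ^ (m + 1) * (M (k + (m + 1))) := by rw [pow_succ]
  -- the fiberwise inner ℂ product identity
  have hchain : ∀ f g : Hsp V, (inner ℂ (S f) (S g) : ℂ) =
      ∑' u : V, (∑' v : (T.par ⁻¹' {u} : Set V), ((wt (v : V) : ℂ)) ^ 2) *
        inner ℂ (f u) (g u) := by
    intro f g
    have h1 : HasSum (fun v : V => ((wt v : ℂ)) ^ 2 *
        (inner ℂ (f (T.par v)) (g (T.par v)) : ℂ)) (inner ℂ (S f) (S g) : ℂ) := by
      have h0 := lp.hasSum_inner (𝕜 := ℂ) (S f) (S g)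
      have hfun : (fun v : V => (inner ℂ ((S f) v) ((S g) v) : ℂ)) =
          fun v : V => ((wt v : ℂ)) ^ 2 * (inner ℂ (f (T.par v)) (g (T.par v)) : ℂ) := by
        funext v
        rw [RCLike.inner_apply, RCLike.inner_apply, hS, hS, map_mul, Complex.conj_ofReal]
        ring
      rwa [hfun] at h0
    have h2 := h1.tsum_fiberwise T.par
    rw [← h2.tsum_eq]
    refine tsum_congr fun u => ?_
    have h3 : ∀ v : (T.par ⁻¹' {u} : Set V),
        ((wt (v : V) : ℂ)) ^ 2 * (inner ℂ (f (T.par (v : V))) (g (T.par (v : V))) : ℂ) =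
        ((wt (v : V) : ℂ)) ^ 2 * (inner ℂ (f u) (g u) : ℂ) := by
      rintro ⟨v, hv⟩
      simp only [Set.mem_preimage, Set.mem_singleton_iff] at hv
      simp only [hv]
    rw [tsum_congr h3, tsum_mul_right]
  -- the value of cc as a fiber sum
  have hcval : ∀ u : V, ((cc u : ℝ) : ℂ) =
      ∑' v : (T.par ⁻¹' {u} : Set V), ((wt (v : V) : ℂ)) ^ 2 := by
    intro u
    have h := hchain (lp.single 2 u (1 : ℂ)) (lp.single 2 u (1 : ℂ))
    have hself : (inner ℂ (S (lp.single 2 u (1 : ℂ))) (S (lp.single 2 u (1 : ℂ))) : ℂ) =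
        ((cc u : ℝ) : ℂ) := by
      rw [inner_self_eq_norm_sq_to_K]
      simp [hcc]
    rw [hself] at h
    rw [h]
    have h4 : ∑' u' : V, (∑' v : (T.par ⁻¹' {u'} : Set V), ((wt (v : V) : ℂ)) ^ 2) *
        (inner ℂ (((lp.single 2 u (1 : ℂ) : Hsp V)) u') (((lp.single 2 u (1 : ℂ) : Hsp V)) u') : ℂ) =
        (∑' v : (T.par ⁻¹' {u} : Set V), ((wt (v : V) : ℂ)) ^ 2) *
        (inner ℂ (((lp.single 2 u (1 : ℂ) : Hsp V)) u) (((lp.single 2 u (1 : ℂ) : Hsp V)) u) : ℂ) := by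
      refine tsum_eq_single u fun u' hu' => ?_
      have hz : ((lp.single 2 u (1 : ℂ) : Hsp V)) u' = 0 :=
        lp.single_apply_ne (E := fun _ : V => ℂ) 2 u (1 : ℂ) hu'
      rw [hz]
      simp
    rw [h4, lp.single_apply_self, RCLike.inner_apply]
    simp
  -- the key identity
  have hKey : ∀ f g : Hsp V, (inner ℂ (S f) (S g) : ℂ) = inner ℂ f (M 0 g) := by
    intro f g
    rw [hchain f g, lp.inner_eq_tsum]
    refine tsum_congr fun u => ?_
    rw [hMap, RCLike.inner_apply, RCLike.inner_apply]
    have : γ 0 u = cc u := by simp [hγ]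
    rw [this]
    rw [← hcval u]
    ring
  -- orthogonality of S^n x and S^(n+1) y for x ∈ ker S*
  have hOrth : ∀ n : ℕ, ∀ x : Hsp V, adjoint S x = 0 → ∀ y : Hsp V,
      (inner ℂ ((S ^ n) x) ((S ^ (n + 1)) y) : ℂ) = 0 := by
    intro n
    induction n with
    | zero =>
      intro x hx y
      simp only [pow_zero, zero_add, pow_one, ContinuousLinearMap.one_apply]
      rw [← ContinuousLinearMap.adjoint_inner_left S y x, hx, inner_zero_left]
    | succ n ih =>
      intro x hx y
      have e1 : (S ^ (n + 1)) x = S ((S ^ n) x) := by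
        rw [pow_succ', ContinuousLinearMap.mul_apply]
      have e2 : (S ^ (n + 1 + 1)) y = S ((S ^ (n + 1)) y) := by
        rw [pow_succ', ContinuousLinearMap.mul_apply]
      rw [e1, e2, hKey]
      have e3 : M 0 ((S ^ (n + 1)) y) = (S ^ (n + 1)) (M (n + 1) y) := by
        have h := congrArg (fun A : Hsp V →L[ℂ] Hsp V => A y) (hM0pow (n + 1) 0)
        simpa [ContinuousLinearMap.mul_apply] using h
      rw [e3]
      exact ih x hx (M (n + 1) y)
  -- S^n x ∈ (range S^(n+1))ᗮ for x ∈ ker S*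
  have hsub : ∀ n : ℕ, ∀ x : Hsp V, adjoint S x = 0 →
      (S ^ n) x ∈ (LinearMap.range (↑(S ^ (n + 1)) : Hsp V →ₗ[ℂ] Hsp V))ᗮ := by
    intro n x hx
    rw [Submodule.mem_orthogonal]
    rintro u hu
    obtain ⟨y, rfl⟩ := LinearMap.mem_range.mp hu
    rw [← inner_conj_symm, ContinuousLinearMap.coe_coe, hOrth n x hx y, map_zero]
  -- ker S* = (range S)ᗮ
  have hker : LinearMap.ker (↑(adjoint S) : Hsp V →ₗ[ℂ] Hsp V) = (LinearMap.range (↑S : Hsp V →ₗ[ℂ] Hsp V))ᗮ := by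
    ext x
    rw [LinearMap.mem_ker, Submodule.mem_orthogonal]
    constructor
    · intro hx u hu
      obtain ⟨y, rfl⟩ := LinearMap.mem_range.mp hu
      simp only [ContinuousLinearMap.coe_coe] at hx ⊢
      rw [← ContinuousLinearMap.adjoint_inner_right, hx, inner_zero_right]
    · intro h
      have h2 : (inner ℂ (adjoint S x) (adjoint S x) : ℂ) = 0 := by
        rw [ContinuousLinearMap.adjoint_inner_left]
        rw [← inner_conj_symm, h (S (adjoint S x)) (LinearMap.mem_range.mpr ⟨_, rfl⟩),
          map_zero]
      exact inner_self_eq_zero.mp h2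
  -- lower bounds and closed range
  have hlowm : ∀ m : ℕ, ∀ f : Hsp V, c₀ ^ m * ‖f‖ ≤ ‖(S ^ m) f‖ := by
    intro m
    induction m with
    | zero => intro f; simp
    | succ m ih =>
      intro f
      have e1 : (S ^ (m + 1)) f = S ((S ^ m) f) := by
        rw [pow_succ', ContinuousLinearMap.mul_apply]
      calc c₀ ^ (m + 1) * ‖f‖ = c₀ * (c₀ ^ m * ‖f‖) := by ring
        _ ≤ c₀ * ‖(S ^ m) f‖ := mul_le_mul_of_nonneg_left (ih f) hc₀.le
        _ ≤ ‖S ((S ^ m) f)‖ := hlow _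
        _ = ‖(S ^ (m + 1)) f‖ := by rw [e1]
  have hclosed : ∀ m : ℕ, IsClosed ((LinearMap.range (↑(S ^ m) : Hsp V →ₗ[ℂ] Hsp V) : Submodule ℂ (Hsp V)) : Set (Hsp V)) := by
    intro m
    have hpos : (0:ℝ) < c₀ ^ m := pow_pos hc₀ m
    have hanti : AntilipschitzWith ((c₀ ^ m)⁻¹).toNNReal ⇑(S ^ m) := by
      apply ContinuousLinearMap.antilipschitz_of_bound
      intro x
      rw [Real.coe_toNNReal _ (by positivity)]
      calc ‖x‖ = (c₀ ^ m)⁻¹ * (c₀ ^ m * ‖x‖) := by field_simp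
        _ ≤ (c₀ ^ m)⁻¹ * ‖(S ^ m) x‖ :=
            mul_le_mul_of_nonneg_left (hlowm m x) (by positivity)
    have h := hanti.isClosed_range (S ^ m).uniformContinuous
    have heq : ((LinearMap.range (↑(S ^ m) : Hsp V →ₗ[ℂ] Hsp V) : Submodule ℂ (Hsp V)) : Set (Hsp V)) =
        Set.range ⇑(S ^ m) := LinearMap.coe_range _
    rw [heq]
    exact h
  -- Part 1
  have part1 : ∀ n : ℕ, Submodule.map (↑(S ^ n) : Hsp V →ₗ[ℂ] Hsp V) (LinearMap.ker (↑(adjoint S) : Hsp V →ₗ[ℂ] Hsp V)) =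
      LinearMap.range (↑(S ^ n) : Hsp V →ₗ[ℂ] Hsp V) ⊓ (LinearMap.range (↑(S ^ (n + 1)) : Hsp V →ₗ[ℂ] Hsp V))ᗮ := by
    intro n
    apply le_antisymm
    · rintro z hz
      obtain ⟨x, hx, rfl⟩ := Submodule.mem_map.mp hz
      exact ⟨LinearMap.mem_range.mpr ⟨x, rfl⟩, hsub n x (LinearMap.mem_ker.mp hx)⟩
    · rintro z ⟨hz1, hz2⟩
      obtain ⟨w, hw⟩ := LinearMap.mem_range.mp hz1
      have hc1 : IsClosed ((LinearMap.range (↑S : Hsp V →ₗ[ℂ] Hsp V) : Submodule ℂ (Hsp V)) : Set (Hsp V)) := by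
        have := hclosed 1
        rwa [pow_one] at this
      haveI : CompleteSpace (LinearMap.range (↑S : Hsp V →ₗ[ℂ] Hsp V) : Submodule ℂ (Hsp V)) := hc1.completeSpace_coe
      obtain ⟨p, hp, q, hq, hpq⟩ :=
        Submodule.exists_add_mem_mem_orthogonal (K := LinearMap.range (↑S : Hsp V →ₗ[ℂ] Hsp V)) w
      obtain ⟨u, hu⟩ := LinearMap.mem_range.mp hp
      rw [← hker] at hq
      have hqker : adjoint S q = 0 := LinearMap.mem_ker.mp hq
      have hzdecomp : z = (S ^ (n + 1)) u + (S ^ n) q := by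
        rw [← hw, hpq, map_add, ← hu, pow_succ, ContinuousLinearMap.mul_apply]
        rfl
      have hSu : (S ^ (n + 1)) u = 0 := by
        have hmem : (S ^ (n + 1)) u ∈ (LinearMap.range (↑(S ^ (n + 1)) : Hsp V →ₗ[ℂ] Hsp V))ᗮ := by
          have h1 : (S ^ (n + 1)) u = z - (S ^ n) q := by
            rw [hzdecomp]; abel
          rw [h1]
          exact Submodule.sub_mem _ hz2 (hsub n q hqker)
        have h2 := (Submodule.mem_orthogonal _ _).mp hmem _
          (LinearMap.mem_range.mpr ⟨u, rfl⟩)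
        exact inner_self_eq_zero.mp h2
      rw [hzdecomp, hSu, zero_add]
      exact Submodule.mem_map.mpr ⟨q, hq, rfl⟩
  -- Part 2
  have part2 : ∀ m n : ℕ, m < n →
      ∀ x ∈ Submodule.map (↑(S ^ m) : Hsp V →ₗ[ℂ] Hsp V) (LinearMap.ker (↑(adjoint S) : Hsp V →ₗ[ℂ] Hsp V)),
        ∀ y ∈ Submodule.map (↑(S ^ n) : Hsp V →ₗ[ℂ] Hsp V) (LinearMap.ker (↑(adjoint S) : Hsp V →ₗ[ℂ] Hsp V)),
          (inner ℂ x y : ℂ) = 0 := by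
    intro m n hmn x hx y hy
    obtain ⟨a, ha, rfl⟩ := Submodule.mem_map.mp hx
    obtain ⟨b, hb, rfl⟩ := Submodule.mem_map.mp hy
    have hb' : (S ^ n) b = (S ^ (m + 1)) ((S ^ (n - m - 1)) b) := by
      rw [← ContinuousLinearMap.mul_apply, ← pow_add]
      congr 2
      omega
    change inner ℂ ((S ^ m) a) ((S ^ n) b) = 0
    rw [hb']
    exact hOrth m a (LinearMap.mem_ker.mp ha) _
  -- orthogonal monotonicity
  have horth : ∀ n : ℕ, (LinearMap.range (↑(S ^ n) : Hsp V →ₗ[ℂ] Hsp V))ᗮ ≤ (LinearMap.range (↑(S ^ (n + 1)) : Hsp V →ₗ[ℂ] Hsp V))ᗮ := by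
    intro n
    apply Submodule.orthogonal_le
    rintro u hu
    obtain ⟨y, rfl⟩ := LinearMap.mem_range.mp hu
    exact LinearMap.mem_range.mpr ⟨S y, by rw [pow_succ]; rfl⟩
  refine ⟨part1, ?_, ?_⟩
  · -- Part 2 final
    intro m n hmn x hx y hy
    rcases lt_or_gt_of_ne hmn with h | h
    · exact part2 m n h x hx y hy
    · rw [← inner_conj_symm, part2 n m h y hy x hx, map_zero]
  · -- Part 3
    intro n
    induction n with
    | zero => intro h; omega
    | succ n ih =>
      intro _
      rcases Nat.eq_zero_or_pos n with h0 | hpos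
      · subst h0
        have hsup : (⨆ k ∈ Finset.range 1,
            Submodule.map (↑(S ^ k) : Hsp V →ₗ[ℂ] Hsp V) (LinearMap.ker (↑(adjoint S) : Hsp V →ₗ[ℂ] Hsp V))) =
            Submodule.map (↑(S ^ 0) : Hsp V →ₗ[ℂ] Hsp V) (LinearMap.ker (↑(adjoint S) : Hsp V →ₗ[ℂ] Hsp V)) := by
          simp [Finset.range_one]
        rw [hsup]
        have hmap : Submodule.map (↑(S ^ 0) : Hsp V →ₗ[ℂ] Hsp V) (LinearMap.ker (↑(adjoint S) : Hsp V →ₗ[ℂ] Hsp V)) =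
            LinearMap.ker (↑(adjoint S) : Hsp V →ₗ[ℂ] Hsp V) := by
          ext x
          constructor
          · rintro ⟨y, hy, rfl⟩
            simpa [pow_zero, ContinuousLinearMap.one_apply] using hy
          · intro hx
            exact ⟨x, hx, by simp [pow_zero, ContinuousLinearMap.one_apply]⟩
        rw [hmap, pow_one, hker]
      · have ihn := ih hpos
        rw [Finset.range_add_one, Finset.iSup_insert, ihn]
        apply le_antisymm
        · apply sup_le
          · rw [part1 n]
            exact inf_le_right
          · exact horth n
        · intro z hz
          haveI : CompleteSpace (LinearMap.range (↑(S ^ n) : Hsp V →ₗ[ℂ] Hsp V) : Submodule ℂ (Hsp V)) :=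
            (hclosed n).completeSpace_coe
          obtain ⟨p, hp, q, hq, hpq⟩ :=
            Submodule.exists_add_mem_mem_orthogonal (K := LinearMap.range (↑(S ^ n) : Hsp V →ₗ[ℂ] Hsp V)) z
          have hpmem : p ∈ Submodule.map (↑(S ^ n) : Hsp V →ₗ[ℂ] Hsp V) (LinearMap.ker (↑(adjoint S) : Hsp V →ₗ[ℂ] Hsp V)) := by
            rw [part1 n]
            refine ⟨hp, ?_⟩
            have hpz : p = z - q := by rw [hpq]; abel
            rw [hpz]
            exact Submodule.sub_mem _ hz (horth n hq)
          rw [hpq]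
          exact Submodule.add_mem _ (Submodule.mem_sup_left hpmem)
            (Submodule.mem_sup_right hq)
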